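/- Let c > 0 and let f : ℝ → ℂ be integrable on [-1, 1]. If ∫_{-1}^{1} e^{i c x y} f(y) dy = 0 for every x ∈ [-1, 1], then f = 0 almost everywhere on [-1, 1]. -/

import Mathlib

open MeasureTheory Complex

lemma hasDerivAt_cexp_mul (a : ℂ) (x : ℝ) :
    HasDerivAt (fun x : ℝ => Complex.exp (a * x)) (a * Complex.exp (a * x)) x := by
  have h1 : HasDerivAt (fun z : ℂ => Complex.exp (a * z)) (Complex.exp (a * ↑x) * a) ↑x := by
    simpa using ((hasDerivAt_id (↑x : ℂ)).const_mul a).cexp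
  simpa [mul_comm] using h1.comp_ofReal

lemma norm_exp_Icy_mul (c y x : ℝ) : ‖Complex.exp ((Complex.I * c * y) * x)‖ = 1 := by
  have : (Complex.I * c * y) * x = ((c * y * x : ℝ) : ℂ) * Complex.I := by
    push_cast; ring
  rw [this]
  simpa using Complex.norm_exp_ofReal_mul_I (c * y * x)

lemma norm_Icy_pow (c y : ℝ) (hy : |y| ≤ 1) (m : ℕ) :
    ‖(Complex.I * c * y) ^ m‖ ≤ |c| ^ m := by
  rw [norm_pow]
  apply pow_le_pow_left₀ (norm_nonneg _)
  have : ‖Complex.I * (c:ℂ) * y‖ = |c| * |y| := by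
    simp [Complex.norm_real]
  rw [this]
  calc |c| * |y| ≤ |c| * 1 := by
        exact mul_le_mul_of_nonneg_left hy (abs_nonneg c)
    _ = |c| := mul_one _

lemma integrand_integrable (c : ℝ) (f : ℝ → ℂ) (hf : IntegrableOn f (Set.Icc (-1:ℝ) 1))
    (n : ℕ) (x : ℝ) :
    IntervalIntegrable (fun y => (Complex.I * c * y) ^ n *
      Complex.exp ((Complex.I * c * y) * x) * f y) volume (-1) 1 := by
  rw [intervalIntegrable_iff]
  have hsub : Set.uIoc (-1:ℝ) 1 ⊆ Set.Icc (-1:ℝ) 1 := by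
    rw [Set.uIoc_of_le (by norm_num : (-1:ℝ) ≤ 1)]
    exact Set.Ioc_subset_Icc_self
  have hmeasf : AEStronglyMeasurable f (volume.restrict (Set.uIoc (-1:ℝ) 1)) :=
    hf.aestronglyMeasurable.mono_measure (Measure.restrict_mono hsub le_rfl)
  have hint : IntegrableOn (fun y => |c| ^ n * ‖f y‖) (Set.uIoc (-1:ℝ) 1) :=
    ((hf.mono_set hsub).norm.const_mul _)
  refine hint.mono' ?_ ?_
  · exact ((Continuous.aestronglyMeasurable (by continuity)).mul hmeasf)
  · filter_upwards [ae_restrict_mem measurableSet_uIoc] with y hy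
    have hy1 : |y| ≤ 1 := by
      rw [Set.uIoc_of_le (by norm_num : (-1:ℝ) ≤ 1)] at hy
      rw [abs_le]; exact ⟨le_of_lt hy.1, hy.2⟩
    calc ‖(Complex.I * c * y) ^ n * Complex.exp ((Complex.I * c * y) * x) * f y‖
        = ‖(Complex.I * c * y) ^ n‖ * ‖Complex.exp ((Complex.I * c * y) * x)‖ * ‖f y‖ := by
          rw [norm_mul, norm_mul]
      _ = ‖(Complex.I * c * y) ^ n‖ * ‖f y‖ := by rw [norm_exp_Icy_mul]; ring
      _ ≤ |c| ^ n * ‖f y‖ :=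
          mul_le_mul_of_nonneg_right (norm_Icy_pow c y hy1 n) (norm_nonneg _)

lemma deriv_step (c : ℝ) (f : ℝ → ℂ) (hf : IntegrableOn f (Set.Icc (-1:ℝ) 1)) (n : ℕ) (x : ℝ) :
    HasDerivAt (fun x : ℝ => ∫ y in (-1:ℝ)..1,
        (Complex.I * c * y) ^ n * Complex.exp ((Complex.I * c * y) * x) * f y)
      (∫ y in (-1:ℝ)..1,
        (Complex.I * c * y) ^ (n+1) * Complex.exp ((Complex.I * c * y) * x) * f y) x := by
  have hsub : Set.uIoc (-1:ℝ) 1 ⊆ Set.Icc (-1:ℝ) 1 := by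
    rw [Set.uIoc_of_le (by norm_num : (-1:ℝ) ≤ 1)]
    exact Set.Ioc_subset_Icc_self
  have hmeasf : AEStronglyMeasurable f (volume.restrict (Set.uIoc (-1:ℝ) 1)) :=
    hf.aestronglyMeasurable.mono_measure (Measure.restrict_mono hsub le_rfl)
  have := (intervalIntegral.hasDerivAt_integral_of_dominated_loc_of_deriv_le
    (F := fun (x : ℝ) (y : ℝ) =>
      (Complex.I * c * y) ^ n * Complex.exp ((Complex.I * c * y) * x) * f y)
    (F' := fun (x : ℝ) (y : ℝ) =>
      (Complex.I * c * y) ^ (n+1) * Complex.exp ((Complex.I * c * y) * x) * f y)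
    (x₀ := x) (bound := fun y => |c| ^ (n+1) * ‖f y‖) (μ := volume) (a := -1) (b := 1)
    Filter.univ_mem ?_ ((integrand_integrable c f hf n x)) ?_ ?_ ?_ ?_).2
  · exact this
  · filter_upwards with x'
    exact ((Continuous.aestronglyMeasurable (by continuity)).mul hmeasf)
  · exact ((Continuous.aestronglyMeasurable (by continuity)).mul hmeasf)
  · filter_upwards with y hy x' _
    have hy1 : |y| ≤ 1 := by
      rw [Set.uIoc_of_le (by norm_num : (-1:ℝ) ≤ 1)] at hy
      rw [abs_le]; exact ⟨le_of_lt hy.1, hy.2⟩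
    calc ‖(Complex.I * c * y) ^ (n+1) * Complex.exp ((Complex.I * c * y) * x') * f y‖
        = ‖(Complex.I * c * y) ^ (n+1)‖ * ‖Complex.exp ((Complex.I * c * y) * x')‖ * ‖f y‖ := by
          rw [norm_mul, norm_mul]
      _ = ‖(Complex.I * c * y) ^ (n+1)‖ * ‖f y‖ := by rw [norm_exp_Icy_mul]; ring
      _ ≤ |c| ^ (n+1) * ‖f y‖ :=
          mul_le_mul_of_nonneg_right (norm_Icy_pow c y hy1 (n+1)) (norm_nonneg _)
  · rw [intervalIntegrable_iff]
    exact (hf.mono_set hsub).norm.const_mul _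
  · filter_upwards with y hy x' _
    have h1 := ((hasDerivAt_cexp_mul (Complex.I * c * y) x').const_mul
      ((Complex.I * c * y) ^ n)).mul_const (f y)
    exact h1.congr_deriv (by ring)

lemma moments (c : ℝ) (hc : 0 < c) (f : ℝ → ℂ)
    (hf : IntegrableOn f (Set.Icc (-1 : ℝ) 1))
    (h : ∀ x ∈ Set.Icc (-1 : ℝ) 1,
      ∫ y in (-1 : ℝ)..1, Complex.exp (Complex.I * c * x * y) * f y = 0) (n : ℕ) :
    ∫ y in (-1:ℝ)..1, (y:ℂ)^n * f y = 0 := by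
  set G : ℕ → ℝ → ℂ := fun n x => ∫ y in (-1:ℝ)..1,
    (Complex.I * c * y) ^ n * Complex.exp ((Complex.I * c * y) * x) * f y with hG
  have key : ∀ n, ∀ x ∈ Set.Ioo (-1:ℝ) 1, G n x = 0 := by
    intro n
    induction n with
    | zero =>
      intro x hx
      rw [hG]
      have := h x (Set.mem_Icc_of_Ioo hx)
      rw [← this]
      apply intervalIntegral.integral_congr
      intro y _
      simp only [pow_zero, one_mul]
      congr 1
      ring
    | succ n ih =>
      intro x hx
      have hev : G n =ᶠ[nhds x] (fun _ => (0:ℂ)) :=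
        Filter.eventually_of_mem (isOpen_Ioo.mem_nhds hx) ih
      have hd : deriv (G n) x = G (n+1) x := (deriv_step c f hf n x).deriv
      rw [← hd, hev.deriv_eq]
      simp
  have h0 := key n 0 (by norm_num)
  rw [hG] at h0
  simp only [Complex.ofReal_zero, mul_zero, Complex.exp_zero, mul_one] at h0
  have heq : ∫ y in (-1:ℝ)..1, (Complex.I * c * y) ^ n * f y
      = (Complex.I * c)^n * ∫ y in (-1:ℝ)..1, (y:ℂ)^n * f y := by
    rw [← intervalIntegral.integral_const_mul]
    apply intervalIntegral.integral_congr
    intro y _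
    simp only [mul_pow]
    ring
  rw [heq] at h0
  have hne : (Complex.I * c)^n ≠ 0 :=
    pow_ne_zero _ (mul_ne_zero Complex.I_ne_zero
      (Complex.ofReal_ne_zero.mpr (ne_of_gt hc)))
  exact (mul_eq_zero.mp h0).resolve_left hne

lemma cont_mul_integrable (f : ℝ → ℂ) (hf : IntegrableOn f (Set.Icc (-1:ℝ) 1))
    (g : ℝ → ℂ) (hg : Continuous g) :
    IntervalIntegrable (fun y => g y * f y) volume (-1) 1 := by
  rw [intervalIntegrable_iff]
  have hsub : Set.uIoc (-1:ℝ) 1 ⊆ Set.Icc (-1:ℝ) 1 := by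
    rw [Set.uIoc_of_le (by norm_num : (-1:ℝ) ≤ 1)]
    exact Set.Ioc_subset_Icc_self
  have hmeasf : AEStronglyMeasurable f (volume.restrict (Set.uIoc (-1:ℝ) 1)) :=
    hf.aestronglyMeasurable.mono_measure (Measure.restrict_mono hsub le_rfl)
  obtain ⟨C, hC⟩ := isCompact_Icc.exists_bound_of_continuousOn
    (f := g) (s := Set.Icc (-1:ℝ) 1) hg.continuousOn
  refine (((hf.mono_set hsub).norm.const_mul C)).mono'
    (hg.aestronglyMeasurable.mul hmeasf) ?_
  filter_upwards [ae_restrict_mem measurableSet_uIoc] with y hy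
  rw [norm_mul]
  exact mul_le_mul_of_nonneg_right (hC y (hsub hy)) (norm_nonneg _)

lemma poly_moments (c : ℝ) (hc : 0 < c) (f : ℝ → ℂ)
    (hf : IntegrableOn f (Set.Icc (-1 : ℝ) 1))
    (h : ∀ x ∈ Set.Icc (-1 : ℝ) 1,
      ∫ y in (-1 : ℝ)..1, Complex.exp (Complex.I * c * x * y) * f y = 0)
    (p : Polynomial ℝ) :
    ∫ y in (-1:ℝ)..1, ((p.eval y : ℝ) : ℂ) * f y = 0 := by
  induction p using Polynomial.induction_on' with
  | monomial n a =>
    have : ∀ y : ℝ, (((Polynomial.monomial n a).eval y : ℝ) : ℂ) * f y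
        = (a:ℂ) * ((y:ℂ)^n * f y) := by
      intro y
      simp [Polynomial.eval_monomial]
      push_cast
      ring
    calc ∫ y in (-1:ℝ)..1, (((Polynomial.monomial n a).eval y : ℝ) : ℂ) * f y
        = ∫ y in (-1:ℝ)..1, (a:ℂ) * ((y:ℂ)^n * f y) := by
          apply intervalIntegral.integral_congr; intro y _; exact this y
      _ = (a:ℂ) * ∫ y in (-1:ℝ)..1, (y:ℂ)^n * f y := intervalIntegral.integral_const_mul _ _
      _ = 0 := by rw [moments c hc f hf h n, mul_zero]
  | add p q hp hq =>
    have hip := cont_mul_integrable f hf (fun y => ((p.eval y : ℝ) : ℂ))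
      (Complex.continuous_ofReal.comp p.continuous_aeval)
    have hiq := cont_mul_integrable f hf (fun y => ((q.eval y : ℝ) : ℂ))
      (Complex.continuous_ofReal.comp q.continuous_aeval)
    have : ∫ y in (-1:ℝ)..1, (((p+q).eval y : ℝ) : ℂ) * f y
        = (∫ y in (-1:ℝ)..1, ((p.eval y : ℝ) : ℂ) * f y)
          + ∫ y in (-1:ℝ)..1, ((q.eval y : ℝ) : ℂ) * f y := by
      rw [← intervalIntegral.integral_add hip hiq]
      apply intervalIntegral.integral_congr; intro y _
      push_cast [Polynomial.eval_add]
      ring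
    rw [this, hp, hq, add_zero]

/-- injectivity of the band-limited Fourier transform `F_c`:
if `f` is integrable on `[-1,1]` and `∫_{-1}^1 e^{i c x y} f(y) dy = 0` for every
`x ∈ [-1,1]`, then `f = 0` a.e. on `[-1,1]`. -/
theorem bandlimited_fourier_injective
    (c : ℝ) (hc : 0 < c) (f : ℝ → ℂ)
    (hf : IntegrableOn f (Set.Icc (-1 : ℝ) 1))
    (h : ∀ x ∈ Set.Icc (-1 : ℝ) 1,
      ∫ y in (-1 : ℝ)..1, Complex.exp (Complex.I * c * x * y) * f y = 0) :
    ∀ᵐ y ∂(volume.restrict (Set.Icc (-1 : ℝ) 1)), f y = 0 := by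
  apply ae_eq_zero_of_integral_contDiff_smul_eq_zero (hf.locallyIntegrable)
  intro g hg hgsupp
  have hgc : Continuous g := hg.continuous
  simp only [Complex.real_smul]
  rw [MeasureTheory.integral_Icc_eq_integral_Ioc,
    ← intervalIntegral.integral_of_le (by norm_num : (-1:ℝ) ≤ 1)]
  set I := ∫ y in (-1:ℝ)..1, ((g y : ℝ) : ℂ) * f y with hI
  set B := ∫ y in (-1:ℝ)..1, ‖f y‖ with hB
  have hfi : IntervalIntegrable f volume (-1) 1 := by
    rw [intervalIntegrable_iff]
    refine hf.mono_set ?_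
    rw [Set.uIoc_of_le (by norm_num : (-1:ℝ) ≤ 1)]
    exact Set.Ioc_subset_Icc_self
  have claim : ∀ ε : ℝ, 0 < ε → ‖I‖ ≤ ε * B := by
    intro ε hε
    obtain ⟨p, hp⟩ := exists_polynomial_near_of_continuousOn (-1) 1 g hgc.continuousOn ε hε
    have hig := cont_mul_integrable f hf (fun y => ((g y : ℝ) : ℂ))
      (Complex.continuous_ofReal.comp hgc)
    have hip := cont_mul_integrable f hf (fun y => ((p.eval y : ℝ) : ℂ))
      (Complex.continuous_ofReal.comp p.continuous_aeval)
    have hI2 : I = ∫ y in (-1:ℝ)..1, (((g y : ℝ) : ℂ) - ((p.eval y : ℝ) : ℂ)) * f y := by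
      have : ∫ y in (-1:ℝ)..1, (((g y : ℝ) : ℂ) - ((p.eval y : ℝ) : ℂ)) * f y
          = (∫ y in (-1:ℝ)..1, ((g y : ℝ) : ℂ) * f y)
            - ∫ y in (-1:ℝ)..1, ((p.eval y : ℝ) : ℂ) * f y := by
        rw [← intervalIntegral.integral_sub hig hip]
        apply intervalIntegral.integral_congr
        intro y _; ring
      rw [this, poly_moments c hc f hf h p, sub_zero]
    rw [hI2]
    have h1 : ‖∫ y in (-1:ℝ)..1, (((g y : ℝ) : ℂ) - ((p.eval y : ℝ) : ℂ)) * f y‖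
        ≤ ∫ y in (-1:ℝ)..1, ‖(((g y : ℝ) : ℂ) - ((p.eval y : ℝ) : ℂ)) * f y‖ :=
      intervalIntegral.norm_integral_le_integral_norm (by norm_num)
    refine h1.trans ?_
    have h2 : ∫ y in (-1:ℝ)..1, ‖(((g y : ℝ) : ℂ) - ((p.eval y : ℝ) : ℂ)) * f y‖
        ≤ ∫ y in (-1:ℝ)..1, ε * ‖f y‖ := by
      apply intervalIntegral.integral_mono_on (by norm_num)
      · simpa only [sub_mul] using (hig.sub hip).norm
      · exact hfi.norm.const_mul ε
      · intro y hy
        rw [norm_mul]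
        apply mul_le_mul_of_nonneg_right _ (norm_nonneg _)
        have : ‖((g y : ℝ) : ℂ) - ((p.eval y : ℝ) : ℂ)‖ = |p.eval y - g y| := by
          rw [← Complex.ofReal_sub, Complex.norm_real, Real.norm_eq_abs, abs_sub_comm]
        rw [this]
        exact le_of_lt (hp y hy)
    refine h2.trans ?_
    rw [intervalIntegral.integral_const_mul]
  have hB0 : 0 ≤ B := by
    rw [hB, intervalIntegral.integral_of_le (by norm_num : (-1:ℝ) ≤ 1)]
    positivity
  have : ‖I‖ ≤ 0 := by
    by_contra h'
    push_neg at h'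
    have hc2 := claim (‖I‖ / (2 * (B + 1))) (by positivity)
    have key : ‖I‖ / (2 * (B + 1)) * B < ‖I‖ := by
      rw [div_mul_eq_mul_div, div_lt_iff₀ (by positivity)]
      nlinarith
    linarith
  exact norm_le_zero_iff.mp this
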